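/- Define iterates of a pair (a,b) in a left distributive algebra by I₁(a,b) = a, I₂(a,b) = a·b, I_{n+2}(a,b) = I_{n+1}(a,b)·I_n(a,b). Then in an algebra satisfying the laws Σ, for every n ≥ 1, I_n(a,b) <_L a∘b, where r <_L s iff s is a left-associated product starting at r with final operation · or ∘. -/
import Mathlib


/-- Iterates of a pair: I₁(a,b)=a, I₂(a,b)=a·b, I_{n+2}=I_{n+1}·I_n (I₀ is a dummy). -/
def iter {P : Type*} (mul : P → P → P) : ℕ → P → P → P
  | 0, a, _ => a
  | 1, a, _ => a
  | 2, a, b => mul a b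
  | n + 3, a, b => mul (iter mul (n + 2) a b) (iter mul (n + 1) a b)

/-- r <_L s : s = r·a₀·...·a_{n-1} ∗ a_n with ∗ ∈ {·, ∘}. -/
def ltLP {P : Type*} (mul comp : P → P → P) (r s : P) : Prop :=
  ∃ (l : List P) (a : P),
    s = mul (List.foldl mul r l) a ∨ s = comp (List.foldl mul r l) a

/-- In an algebra satisfying Σ, every iterate I_n(a,b) (n ≥ 1) satisfies I_n(a,b) <_L a∘b. -/
theorem iter_ltLP_comp {P : Type*} (mul comp : P → P → P)
    (hassoc : ∀ a b c, comp a (comp b c) = comp (comp a b) c)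
    (hmix : ∀ a b c, mul (comp a b) c = mul a (mul b c))
    (hdist : ∀ a b c, mul a (comp b c) = comp (mul a b) (mul a c))
    (habs : ∀ a b, comp a b = comp (mul a b) a) :
    ∀ (a b : P) (n : ℕ), 1 ≤ n → ltLP mul comp (iter mul n a b) (comp a b) := by
  intro a b
  have key : ∀ m : ℕ, comp a b = comp (iter mul (m + 2) a b) (iter mul (m + 1) a b) := by
    intro m
    induction m with
    | zero => simpa [iter] using habs a b
    | succ k ih =>
      rw [ih, habs (iter mul (k + 2) a b) (iter mul (k + 1) a b)]
      rfl
  intro n hn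
  match n, hn with
  | 1, _ => exact ⟨[], b, Or.inr rfl⟩
  | (m + 2), _ => exact ⟨[], iter mul (m + 1) a b, Or.inr (key m)⟩
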